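/- arXiv:1903.00076 — 2 statements merged into one kernel-verified Lean document; each statement's English description precedes it below -/
import Mathlib

section
/- Let η > 0 be a real number, let λ₀ : ℝ → ℝ be a continuous function, and let Λ₀(t) = ∫₀ᵗ λ₀(v) dv. For each natural number i define P_i(t) = ((∏_{k=0}^{i−1}(η⁻¹ + k))/i!) · (1 − exp(−ηΛ₀(t)))^i · (exp(−ηΛ₀(t)))^{η⁻¹}, and define the state-dependent shock intensities λ_i(t) = (1 + ηi)·λ₀(t). Then the functions P_i solve the pure-birth (Kolmogorov forward) equations of the facilitation shock model: P₀(0) = 1, P_i(0) = 0 for i ≥ 1, the derivative of P₀ at every t satisfies P₀′(t) = −λ₀(t)·P₀(t), and for every i ≥ 1 and every t, P_i′(t) = λ_{i−1}(t)·P_{i−1}(t) − λ_i(t)·P_i(t). -/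
open Real Finset

/-- The facilitation-model probabilities `P i t` solve the pure-birth
(Kolmogorov forward) equations with intensities `λ_i(t) = (1 + η i) lam₀(t)`. -/
theorem facilitation_forward_equations
    (η : ℝ) (hη : 0 < η)
    (lam₀ : ℝ → ℝ) (hlam₀ : Continuous lam₀)
    (Λ₀ : ℝ → ℝ) (hΛ₀ : ∀ t, Λ₀ t = ∫ v in (0 : ℝ)..t, lam₀ v)
    (P : ℕ → ℝ → ℝ)
    (hP : ∀ i t, P i t =
      ((∏ k ∈ Finset.range i, (η⁻¹ + (k : ℝ))) / (Nat.factorial i : ℝ)) *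
        (1 - Real.exp (-(η * Λ₀ t))) ^ i * (Real.exp (-(η * Λ₀ t))) ^ (η⁻¹)) :
    P 0 0 = 1 ∧
    (∀ i : ℕ, 1 ≤ i → P i 0 = 0) ∧
    (∀ t : ℝ, HasDerivAt (P 0) (-(lam₀ t) * P 0 t) t) ∧
    (∀ i : ℕ, 1 ≤ i → ∀ t : ℝ,
      HasDerivAt (P i)
        ((1 + η * ((i : ℝ) - 1)) * lam₀ t * P (i - 1) t
          - (1 + η * (i : ℝ)) * lam₀ t * P i t) t) := by
  have hηne : η ≠ 0 := hη.ne'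
  set A : ℕ → ℝ := fun i =>
    (∏ k ∈ Finset.range i, (η⁻¹ + (k : ℝ))) / (Nat.factorial i : ℝ) with hA
  -- rewrite the rpow as a plain exponential
  have hrpow : ∀ t, (Real.exp (-(η * Λ₀ t))) ^ (η⁻¹) = Real.exp (-Λ₀ t) := by
    intro t
    rw [Real.rpow_def_of_pos (Real.exp_pos _), Real.log_exp]
    congr 1
    field_simp
  have hPfun : ∀ i, P i = fun t =>
      A i * (1 - Real.exp (-(η * Λ₀ t))) ^ i * Real.exp (-Λ₀ t) := by
    intro i; funext t; rw [hP, hrpow]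
  have hΛ0 : Λ₀ 0 = 0 := by rw [hΛ₀]; simp
  have hG : ∀ t, HasDerivAt Λ₀ (lam₀ t) t := by
    intro t
    have : HasDerivAt (fun u => ∫ v in (0:ℝ)..u, lam₀ v) (lam₀ t) t :=
      (hlam₀.integral_hasStrictDerivAt 0 t).hasDerivAt
    exact this.congr_of_eventuallyEq (Filter.Eventually.of_forall fun u => hΛ₀ u)
  -- derivative building blocks
  have hE : ∀ t, HasDerivAt (fun t => Real.exp (-(η * Λ₀ t)))
      (Real.exp (-(η * Λ₀ t)) * (-(η * lam₀ t))) t := by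
    intro t
    exact (((hG t).const_mul η).neg).exp
  have h1E : ∀ t, HasDerivAt (fun t => 1 - Real.exp (-(η * Λ₀ t)))
      (Real.exp (-(η * Λ₀ t)) * (η * lam₀ t)) t := by
    intro t
    have := (hE t).const_sub (1:ℝ)
    simpa using this
  have hexpG : ∀ t, HasDerivAt (fun t => Real.exp (-Λ₀ t))
      (Real.exp (-Λ₀ t) * (-lam₀ t)) t := by
    intro t; exact ((hG t).neg).exp
  have hDi : ∀ (i : ℕ) (t : ℝ), HasDerivAt (P i)
      (A i * ((i : ℝ) * (1 - Real.exp (-(η * Λ₀ t))) ^ (i - 1) *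
          (Real.exp (-(η * Λ₀ t)) * (η * lam₀ t)) * Real.exp (-Λ₀ t)
        + (1 - Real.exp (-(η * Λ₀ t))) ^ i * (Real.exp (-Λ₀ t) * (-lam₀ t)))) t := by
    intro i t
    rw [hPfun i]
    have hpow := (h1E t).pow i
    have := (hpow.mul (hexpG t)).const_mul (A i)
    have hfun : (fun u => A i * (1 - Real.exp (-(η * Λ₀ u))) ^ i * Real.exp (-Λ₀ u)) =
        fun y => A i * (((fun t => 1 - Real.exp (-(η * Λ₀ t))) ^ i * fun t => Real.exp (-Λ₀ t)) y) := by
      funext u; simp only [Pi.mul_apply, Pi.pow_apply]; ring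
    rw [hfun]
    exact this
  refine ⟨?_, ?_, ?_, ?_⟩
  · rw [hPfun 0]; simp [hΛ0, hA]
  · intro i hi
    rw [hPfun i]
    simp only
    rw [hΛ0]
    simp
    exact Or.inr (by omega)
  · intro t
    have := hDi 0 t
    rw [hPfun 0] at this ⊢
    simp only at this ⊢
    convert this using 1
    simp [hA]
    ring
  · intro i hi t
    obtain ⟨j, rfl⟩ : ∃ j, i = j + 1 := ⟨i - 1, by omega⟩
    have := hDi (j + 1) t
    rw [hPfun (j+1)] at this ⊢
    rw [show j + 1 - 1 = j from rfl, hPfun j]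
    simp only
    convert this using 1
    have hAsucc : A (j + 1) = A j * (η⁻¹ + j) / (j + 1) := by
      simp [hA, Finset.prod_range_succ, Nat.factorial_succ]
      field_simp
    rw [hAsucc]
    simp only [Nat.add_sub_cancel]
    push_cast
    field_simp
    ring
end

section
/- Let η > 0 be a real number, let λ₀ : ℝ → ℝ be a continuous function, let Λ₀(t) = ∫₀ᵗ λ₀(v) dv, and for each natural number i define P_i(t) = ((∏_{k=0}^{i−1}(η⁻¹ + k))/i!) · (1 − exp(−ηΛ₀(t)))^i · (exp(−ηΛ₀(t)))^{η⁻¹}. For a fixed integer j ≥ 1, define F_{t_j}(t) = 1 − ∑_{i=0}^{j−1} P_i(t), the distribution function of the arrival time of the j-th shock. Then F_{t_j} is differentiable at every t and its derivative (the probability density of the j-th shock arrival time) is f_{t_j}(t) = (1 + η(j−1))·λ₀(t)·P_{j−1}(t). -/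
open Real Finset

/-- The distribution function of the arrival time of the `j`-th shock in the
facilitation model is differentiable, with density
`f_{t_j}(t) = (1 + η (j-1)) lam₀(t) P_{j-1}(t)`. -/
theorem jth_shock_arrival_density
    (η : ℝ) (hη : 0 < η)
    (lam₀ : ℝ → ℝ) (hlam₀ : Continuous lam₀)
    (Λ₀ : ℝ → ℝ) (hΛ₀ : ∀ t, Λ₀ t = ∫ v in (0 : ℝ)..t, lam₀ v)
    (P : ℕ → ℝ → ℝ)
    (hP : ∀ i t, P i t =
      ((∏ k ∈ Finset.range i, (η⁻¹ + (k : ℝ))) / (Nat.factorial i : ℝ)) *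
        (1 - Real.exp (-(η * Λ₀ t))) ^ i * (Real.exp (-(η * Λ₀ t))) ^ (η⁻¹))
    (j : ℕ) (hj : 1 ≤ j)
    (F : ℝ → ℝ) (hF : ∀ t, F t = 1 - ∑ i ∈ Finset.range j, P i t) :
    ∀ t : ℝ, HasDerivAt F ((1 + η * ((j : ℝ) - 1)) * lam₀ t * P (j - 1) t) t := by
  intro t
  set c : ℕ → ℝ := fun i => (∏ k ∈ Finset.range i, (η⁻¹ + (k : ℝ))) / (Nat.factorial i : ℝ) with hc
  set u : ℝ → ℝ := fun s => Real.exp (-(η * Λ₀ s)) with hu_def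
  have hune : ∀ s, u s ≠ 0 := fun s => Real.exp_ne_zero _
  have hP' : ∀ i s, P i s = c i * (1 - u s) ^ i * (u s) ^ (η⁻¹) := fun i s => hP i s
  have hΛd : ∀ s, HasDerivAt Λ₀ (lam₀ s) s := by
    intro s
    have hfun : Λ₀ = fun r => ∫ v in (0 : ℝ)..r, lam₀ v := funext hΛ₀
    rw [hfun]
    exact intervalIntegral.integral_hasDerivAt_right (hlam₀.intervalIntegrable _ _)
      (hlam₀.stronglyMeasurable.stronglyMeasurableAtFilter) hlam₀.continuousAt
  have hu : ∀ s, HasDerivAt u (-(η * lam₀ s) * u s) s := by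
    intro s
    have h := (((hΛd s).const_mul η).neg).exp
    convert h using 1
    simp [hu_def]
    show -(η * lam₀ s) * u s = Real.exp (-(η * Λ₀ s)) * -(η * lam₀ s)
    ring
  have hαη : η⁻¹ * η = 1 := inv_mul_cancel₀ hη.ne'
  have hgen : ∀ i s, HasDerivAt (P i)
      (c i * (η * i * (1 - u s) ^ (i - 1) - (1 + η * i) * (1 - u s) ^ i) *
        (lam₀ s * (u s) ^ (η⁻¹))) s := by
    intro i s
    have h1 : HasDerivAt (fun r => (1 - u r) ^ i)
        ((i : ℝ) * (1 - u s) ^ (i - 1) * (0 - -(η * lam₀ s) * u s)) s :=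
      ((hasDerivAt_const s (1 : ℝ)).sub (hu s)).pow i
    have h2 : HasDerivAt (fun r => (u r) ^ (η⁻¹))
        (-(η * lam₀ s) * u s * η⁻¹ * (u s) ^ (η⁻¹ - 1)) s :=
      (hu s).rpow_const (Or.inl (hune s))
    have hW : -(η * lam₀ s) * u s * η⁻¹ * (u s) ^ (η⁻¹ - 1)
        = -(lam₀ s) * (u s) ^ (η⁻¹) := by
      have hr : (u s) ^ (η⁻¹ - 1) * u s = (u s) ^ (η⁻¹) := by
        rw [← Real.rpow_add_one (hune s)]; ring_nf
      linear_combination (-(η⁻¹ * η * lam₀ s)) * hr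
        + (-(lam₀ s * (u s) ^ (η⁻¹))) * hαη
    rw [hW] at h2
    have h3 := (h1.mul h2).const_mul (c i)
    have hfun : P i = fun r => c i * ((1 - u r) ^ i * (u r) ^ (η⁻¹)) := by
      funext r; rw [hP' i r]; ring
    rw [hfun]
    convert h3 using 1
    · rfl
    · rfl
    · rfl
    rcases i with _ | m
    · simp
    · simp only [Nat.add_sub_cancel, Nat.cast_add, Nat.cast_one]
      have hps : (1 - u s) ^ (m + 1) = (1 - u s) ^ m * (1 - u s) := pow_succ _ _
      rw [hps]
      ring
  have hcrel : ∀ m : ℕ, c (m + 1) * (η * ((m : ℝ) + 1)) = (1 + η * m) * c m := by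
    intro m
    have hfac : ((Nat.factorial (m + 1) : ℝ)) = (Nat.factorial m : ℝ) * ((m : ℝ) + 1) := by
      push_cast [Nat.factorial_succ]; ring
    have hprod : (∏ k ∈ Finset.range (m + 1), (η⁻¹ + (k : ℝ)))
        = (∏ k ∈ Finset.range m, (η⁻¹ + (k : ℝ))) * (η⁻¹ + m) := Finset.prod_range_succ _ _
    have hfne : (Nat.factorial m : ℝ) ≠ 0 := Nat.cast_ne_zero.mpr (Nat.factorial_ne_zero m)
    have hm1 : ((m : ℝ) + 1) ≠ 0 := by positivity
    simp only [hc, hprod, hfac]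
    field_simp
  have hstep : ∀ (m : ℕ) (s : ℝ), HasDerivAt (P (m + 1))
      ((1 + η * m) * lam₀ s * P m s - (1 + η * (m + 1)) * lam₀ s * P (m + 1) s) s := by
    intro m s
    convert hgen (m + 1) s using 1
    rw [hP' m s, hP' (m + 1) s]
    simp only [Nat.add_sub_cancel, Nat.cast_add, Nat.cast_one]
    linear_combination (-(lam₀ s * (u s) ^ (η⁻¹) * (1 - u s) ^ m)) * hcrel m
  have hsum : ∀ (n : ℕ) (s : ℝ), HasDerivAt (fun r => ∑ i ∈ Finset.range (n + 1), P i r)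
      (-((1 + η * n) * lam₀ s * P n s)) s := by
    intro n
    induction n with
    | zero =>
      intro s
      have h0 := hgen 0 s
      have hfun : (fun r => ∑ i ∈ Finset.range 1, P i r) = P 0 := by
        funext r; simp
      rw [hfun]
      convert h0 using 1
      rw [hP' 0 s]
      simp
      ring
    | succ n ih =>
      intro s
      have hfun : (fun r => ∑ i ∈ Finset.range (n + 2), P i r)
          = fun r => (∑ i ∈ Finset.range (n + 1), P i r) + P (n + 1) r := by
        funext r; rw [Finset.sum_range_succ]
      rw [hfun]
      have h := (ih s).add (hstep n s)
      convert h using 1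
      · rfl
      · rfl
      · rfl
      push_cast
      ring
  obtain ⟨m, rfl⟩ : ∃ m, j = m + 1 := ⟨j - 1, (Nat.succ_pred_eq_of_pos hj).symm⟩
  have hFfun : F = fun s => 1 - ∑ i ∈ Finset.range (m + 1), P i s := funext hF
  rw [hFfun]
  have h := (hasDerivAt_const t (1 : ℝ)).sub (hsum m t)
  convert h using 1
  · rfl
  · rfl
  · rfl
  simp only [Nat.add_sub_cancel]
  push_cast
  ring
end
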